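/- Let f(z) = ∑_{k=0}^∞ a_k z^k be analytic on the open unit disk D with |f(z)| < 1 for all z ∈ D, and let N ≥ 1 be an integer. If 0 ≤ r < 1 satisfies 2(1+r)r^N ≤ (1-r)^2, then for every z ∈ ℂ with |z| = r one has |f(z)| + ∑_{k=N}^∞ |a_k| r^k ≤ 1. (In particular this holds for all r ≤ R_N, where R_N is the positive root of 2(1+r)r^N - (1-r)^2 = 0.) -/

import Mathlib

open Metric Real intervalIntegral Complex

noncomputable section BohrRogosinskiAux

lemma summable_abs_rpow {a : ℕ → ℂ}
    (h : ∀ ρ' : ℝ, 0 ≤ ρ' → ρ' < 1 → Summable (fun m => a m * (ρ' : ℂ)^m))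
    {ρ : ℝ} (h0 : 0 ≤ ρ) (h1 : ρ < 1) :
    Summable (fun m => ‖(a m)‖ * ρ^m) := by
  set ρ' : ℝ := (1 + ρ)/2 with hρ'
  have hρ'0 : 0 < ρ' := by positivity
  have hρρ' : ρ < ρ' := by rw [hρ']; linarith
  have hρ'1 : ρ' < 1 := by rw [hρ']; linarith
  have hs : Summable (fun m => ‖(a m)‖ * ρ'^m) := by
    have := summable_norm_iff.mpr (h ρ' hρ'0.le hρ'1)
    simpa [norm_mul, norm_pow, Complex.norm_real, Real.norm_eq_abs,
      _root_.abs_of_nonneg hρ'0.le] using this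
  set C := ∑' m, ‖(a m)‖ * ρ'^m with hC
  have hle : ∀ m, ‖(a m)‖ * ρ'^m ≤ C := fun m =>
    Summable.le_tsum hs m (fun j _ => by positivity)
  have hq0 : 0 ≤ ρ/ρ' := by positivity
  have hq1 : ρ/ρ' < 1 := (div_lt_one hρ'0).2 hρρ'
  refine Summable.of_nonneg_of_le (fun m => by positivity)
    (fun m => ?_) ((summable_geometric_of_lt_one hq0 hq1).mul_left C)
  have he : (‖(a m)‖ * ρ'^m) * (ρ/ρ')^m = ‖(a m)‖ * ρ^m := by
    rw [mul_assoc, ← mul_pow, mul_div_cancel₀ _ hρ'0.ne']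
  rw [← he]
  exact mul_le_mul_of_nonneg_right (hle m) (by positivity)



lemma intExpI (n : ℤ) : (∫ θ : ℝ in (0:ℝ)..(2*π), Complex.exp ((n : ℂ) * θ * Complex.I))
    = if n = 0 then (2*π : ℂ) else 0 := by
  split_ifs with h
  · simp [h, intervalIntegral.integral_const]
  · have hc : (n : ℂ) * Complex.I ≠ 0 := by
      simp [Complex.I_ne_zero, Complex.ext_iff]
      exact_mod_cast h
    rw [show (fun θ : ℝ => Complex.exp ((n : ℂ) * θ * Complex.I)) = fun θ : ℝ => Complex.exp (((n:ℂ)*Complex.I) * θ) by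
      funext θ; ring_nf]
    rw [integral_exp_mul_complex hc]
    have h1 : Complex.exp (((n:ℂ)*Complex.I) * ((2*π : ℝ) : ℂ)) = 1 := by
      rw [show ((n:ℂ)*Complex.I) * ((2*π:ℝ):ℂ) = (n:ℂ) * (2*π*Complex.I) by push_cast; ring]
      exact Complex.exp_int_mul_two_pi_mul_I n
    rw [h1]
    simp

lemma interchange {a : ℕ → ℂ} {f : ℂ → ℂ}
    (hsum : ∀ z ∈ ball (0:ℂ) 1, HasSum (fun k : ℕ => a k * z ^ k) (f z))
    {ρ : ℝ} (hρ0 : 0 < ρ) (hρ1 : ρ < 1)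
    (habs : Summable (fun m => ‖(a m)‖ * ρ^m))
    (k : ℕ) :
    (∫ θ : ℝ in (0:ℝ)..(2*π),
        f ((ρ:ℂ) * Complex.exp (θ * I)) * Complex.exp (-(k:ℂ) * θ * I))
      = 2 * π * a k * ρ^k := by
  set w : ℝ → ℂ := fun θ => (ρ:ℂ) * Complex.exp (θ * I) with hw
  have hwball : ∀ θ : ℝ, w θ ∈ ball (0:ℂ) 1 := by
    intro θ
    simp only [hw, mem_ball, dist_zero_right, norm_mul,
      Complex.norm_real, Real.norm_eq_abs, Complex.norm_exp_ofReal_mul_I, mul_one, _root_.abs_of_nonneg hρ0.le]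
    exact hρ1
  set F : ℕ → C(ℝ, ℂ) := fun m =>
    ⟨fun θ => a m * (w θ)^m * Complex.exp (-(k:ℂ) * θ * I), by fun_prop⟩ with hF
  have hnorm : ∀ m θ, ‖(F m θ)‖ = ‖(a m)‖ * ρ^m := by
    intro m θ
    simp [hF, hw, norm_mul, norm_pow, Complex.norm_real, Real.norm_eq_abs, Complex.norm_exp,
      _root_.abs_of_nonneg hρ0.le]
  have hsummable : Summable fun m : ℕ =>
      ‖ContinuousMap.restrict (↑(⟨Set.uIcc (0:ℝ) (2*π), isCompact_uIcc⟩ : TopologicalSpace.Compacts ℝ)) (F m)‖ := by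
    refine habs.of_nonneg_of_le (fun m => norm_nonneg _) (fun m => ?_)
    refine ContinuousMap.norm_le _ (by positivity) |>.2 ?_
    intro x
    simp only [ContinuousMap.restrict_apply]
    exact le_of_eq (hnorm m x)
  have hhs := intervalIntegral.hasSum_intervalIntegral_of_summable_norm (a := 0) (b := 2*π) hsummable
  have hpt : ∀ θ : ℝ, (∑' m, F m θ) = f (w θ) * Complex.exp (-(k:ℂ) * θ * I) := by
    intro θ
    exact ((hsum (w θ) (hwball θ)).mul_right _).tsum_eq
  rw [intervalIntegral.integral_congr (fun θ _ => hpt θ)] at hhs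
  have hterm : ∀ m : ℕ, (∫ θ : ℝ in (0:ℝ)..(2*π), F m θ)
      = if m = k then 2 * π * a k * ρ^k else 0 := by
    intro m
    have heq : ∀ θ : ℝ, F m θ = (a m * ρ^m) * Complex.exp ((((m:ℤ) - (k:ℤ) : ℤ) : ℂ) * θ * I) := by
      intro θ
      simp only [hF, hw, ContinuousMap.coe_mk]
      rw [mul_pow, ← Complex.exp_nat_mul,
        show ((((m:ℤ) - (k:ℤ) : ℤ):ℂ) * θ * I) = ((m:ℂ) * (θ * I)) + (-(k:ℂ) * θ * I) by push_cast; ring,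
        Complex.exp_add]
      push_cast
      ring
    rw [intervalIntegral.integral_congr (fun θ _ => heq θ), intervalIntegral.integral_const_mul]
    rw [intExpI]
    split_ifs with h1 h2 h2
    · rw [show m = k from by omega]; push_cast; ring
    · exact absurd (by omega) h2
    · exact absurd (by omega : ((m:ℤ) - (k:ℤ) = 0)) h1
    · ring
  rw [funext hterm] at hhs
  exact ((hasSum_ite_eq k _).unique hhs).symm




lemma interchange_conj {a : ℕ → ℂ} {f : ℂ → ℂ}
    (hsum : ∀ z ∈ ball (0:ℂ) 1, HasSum (fun k : ℕ => a k * z ^ k) (f z))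
    {ρ : ℝ} (hρ0 : 0 < ρ) (hρ1 : ρ < 1)
    (habs : Summable (fun m => ‖(a m)‖ * ρ^m))
    (k : ℕ) (hk : 1 ≤ k) :
    (∫ θ : ℝ in (0:ℝ)..(2*π),
        (starRingEnd ℂ) (f ((ρ:ℂ) * Complex.exp (θ * I))) * Complex.exp (-(k:ℂ) * θ * I)) = 0 := by
  set w : ℝ → ℂ := fun θ => (ρ:ℂ) * Complex.exp (θ * I) with hw
  have hwball : ∀ θ : ℝ, w θ ∈ ball (0:ℂ) 1 := by
    intro θ
    simp only [hw, mem_ball, dist_zero_right, norm_mul,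
      Complex.norm_real, Real.norm_eq_abs, Complex.norm_exp_ofReal_mul_I, mul_one, _root_.abs_of_nonneg hρ0.le]
    exact hρ1
  set F : ℕ → C(ℝ, ℂ) := fun m =>
    ⟨fun θ => (starRingEnd ℂ) (a m * (w θ)^m) * Complex.exp (-(k:ℂ) * θ * I), (Complex.continuous_conj.comp (by fun_prop)).mul (by fun_prop)⟩ with hF
  have hsummable : Summable fun m : ℕ =>
      ‖ContinuousMap.restrict (↑(⟨Set.uIcc (0:ℝ) (2*π), isCompact_uIcc⟩ : TopologicalSpace.Compacts ℝ)) (F m)‖ := by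
    refine habs.of_nonneg_of_le (fun m => norm_nonneg _) (fun m => ?_)
    refine ContinuousMap.norm_le _ (by positivity) |>.2 ?_
    intro x
    simp only [ContinuousMap.restrict_apply]
    simp [hF, hw, norm_mul, norm_pow, Complex.norm_real, Real.norm_eq_abs, Complex.norm_exp,
      _root_.abs_of_nonneg hρ0.le]
  have hhs := intervalIntegral.hasSum_intervalIntegral_of_summable_norm (a := 0) (b := 2*π) hsummable
  have hpt : ∀ θ : ℝ, (∑' m, F m θ) = (starRingEnd ℂ) (f (w θ)) * Complex.exp (-(k:ℂ) * θ * I) := by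
    intro θ
    exact (((hsum (w θ) (hwball θ)).map (starRingEnd ℂ) (Complex.continuous_conj)).mul_right _).tsum_eq
  rw [intervalIntegral.integral_congr (fun θ _ => hpt θ)] at hhs
  have hterm : ∀ m : ℕ, (∫ θ : ℝ in (0:ℝ)..(2*π), F m θ) = 0 := by
    intro m
    have heq : ∀ θ : ℝ, F m θ
        = ((starRingEnd ℂ) (a m) * ρ^m) * Complex.exp (((-(m:ℤ) - (k:ℤ) : ℤ) : ℂ) * θ * I) := by
      intro θ
      simp only [hF, hw, ContinuousMap.coe_mk, map_mul, map_pow, Complex.conj_ofReal,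
        ← Complex.exp_conj, Complex.conj_I]
      rw [mul_pow, ← Complex.exp_nat_mul,
        show (((-(m:ℤ) - (k:ℤ) : ℤ):ℂ) * θ * I) = ((m:ℂ) * ((θ:ℂ) * -I)) + (-(k:ℂ) * θ * I) by push_cast; ring,
        Complex.exp_add]
      ring
    rw [intervalIntegral.integral_congr (fun θ _ => heq θ), intervalIntegral.integral_const_mul]
    rw [intExpI]
    have : ¬(-(m:ℤ) - (k:ℤ) = 0) := by omega
    simp [this]
  rw [funext hterm] at hhs
  simpa using hhs.unique hasSum_zero




lemma coeff_bound_at {a : ℕ → ℂ} {f : ℂ → ℂ}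
    (hf : AnalyticOn ℂ f (ball (0:ℂ) 1))
    (hsum : ∀ z ∈ ball (0:ℂ) 1, HasSum (fun k : ℕ => a k * z ^ k) (f z))
    (hbound : ∀ z ∈ ball (0:ℂ) 1, ‖(f z)‖ < 1)
    {ρ : ℝ} (hρ0 : 0 < ρ) (hρ1 : ρ < 1)
    (habs : Summable (fun m => ‖(a m)‖ * ρ^m))
    (k : ℕ) (hk : 1 ≤ k) :
    ‖(a k)‖ * ρ^k ≤ 2 * (1 - ‖(a 0)‖) := by
  set w : ℝ → ℂ := fun θ => (ρ:ℂ) * Complex.exp (θ * I) with hw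
  have hwball : ∀ θ : ℝ, w θ ∈ ball (0:ℂ) 1 := by
    intro θ
    simp only [hw, mem_ball, dist_zero_right, norm_mul,
      Complex.norm_real, Real.norm_eq_abs, Complex.norm_exp_ofReal_mul_I, mul_one, _root_.abs_of_nonneg hρ0.le]
    exact hρ1
  -- the unimodular constant
  obtain ⟨c, hc1, hc2⟩ : ∃ c : ℂ, ‖c‖ = 1 ∧ c * a 0 = (‖(a 0)‖ : ℂ) := by
    by_cases h : a 0 = 0
    · exact ⟨1, by simp, by simp [h]⟩
    · refine ⟨(starRingEnd ℂ) (a 0) / (‖(a 0)‖ : ℂ), ?_, ?_⟩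
      · simp [norm_div, Complex.norm_conj, Complex.norm_real, Real.norm_eq_abs,
          _root_.abs_of_nonneg (norm_nonneg _),
          div_self ((norm_ne_zero_iff.mpr h))]
      · have hne : ‖(a 0)‖ ≠ 0 := (norm_ne_zero_iff.mpr h)
        rw [div_mul_eq_mul_div, mul_comm, Complex.mul_conj, ← Complex.ofReal_div]
        norm_cast
        rw [Complex.normSq_eq_norm_sq, sq, mul_div_assoc, div_self hne, mul_one]
  -- continuity facts
  have hcw : Continuous w := by fun_prop
  have hcf : Continuous fun θ => f (w θ) :=
    hf.continuousOn.comp_continuous hcw hwball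
  have hint1 : IntervalIntegrable (fun θ : ℝ => c * f (w θ) * Complex.exp (-(k:ℂ) * θ * I))
      MeasureTheory.volume 0 (2*π) :=
    ((continuous_const.mul hcf).mul (by fun_prop)).intervalIntegrable _ _
  have hint2 : IntervalIntegrable
      (fun θ : ℝ => (starRingEnd ℂ) (c * f (w θ)) * Complex.exp (-(k:ℂ) * θ * I))
      MeasureTheory.volume 0 (2*π) :=
    ((Complex.continuous_conj.comp (continuous_const.mul hcf)).mul
      (by fun_prop)).intervalIntegrable _ _
  have hint3 : IntervalIntegrable (fun θ : ℝ => (2:ℂ) * Complex.exp (-(k:ℂ) * θ * I))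
      MeasureTheory.volume 0 (2*π) := (by fun_prop : Continuous _).intervalIntegrable _ _
  -- the three integral identities
  have I1 : (∫ θ : ℝ in (0:ℝ)..(2*π), c * f (w θ) * Complex.exp (-(k:ℂ) * θ * I))
      = c * (2 * π * a k * ρ^k) := by
    rw [show (fun θ : ℝ => c * f (w θ) * Complex.exp (-(k:ℂ) * θ * I))
        = fun θ : ℝ => c * (f (w θ) * Complex.exp (-(k:ℂ) * θ * I)) from funext fun θ => by ring]
    rw [intervalIntegral.integral_const_mul, interchange hsum hρ0 hρ1 habs k]
  have I2 : (∫ θ : ℝ in (0:ℝ)..(2*π),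
      (starRingEnd ℂ) (c * f (w θ)) * Complex.exp (-(k:ℂ) * θ * I)) = 0 := by
    rw [show (fun θ : ℝ => (starRingEnd ℂ) (c * f (w θ)) * Complex.exp (-(k:ℂ) * θ * I))
        = fun θ : ℝ => (starRingEnd ℂ) c *
            ((starRingEnd ℂ) (f (w θ)) * Complex.exp (-(k:ℂ) * θ * I)) from
      funext fun θ => by rw [map_mul]; ring]
    rw [intervalIntegral.integral_const_mul, interchange_conj hsum hρ0 hρ1 habs k hk, mul_zero]
  have I3 : (∫ θ : ℝ in (0:ℝ)..(2*π), (2:ℂ) * Complex.exp (-(k:ℂ) * θ * I)) = 0 := by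
    rw [intervalIntegral.integral_const_mul]
    rw [show (fun θ : ℝ => Complex.exp (-(k:ℂ) * θ * I))
        = fun θ : ℝ => Complex.exp (((-(k:ℤ) : ℤ) : ℂ) * θ * I) from funext fun θ => by push_cast; ring_nf]
    rw [intExpI]
    have : ¬(-(k:ℤ) = 0) := by omega
    simp [this]
  -- the real-valued nonneg function
  set g : ℝ → ℝ := fun θ => 2 - 2 * (c * f (w θ)).re with hg
  have hg0 : ∀ θ, 0 ≤ g θ := by
    intro θ
    have h1 : (c * f (w θ)).re ≤ ‖(c * f (w θ))‖ := Complex.re_le_norm _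
    have h2 : ‖(c * f (w θ))‖ < 1 := by
      rw [norm_mul, hc1, one_mul]; exact hbound _ (hwball θ)
    simp only [hg]; linarith
  have hGc : ∀ θ : ℝ, ((g θ : ℝ) : ℂ)
      = 2 - c * f (w θ) - (starRingEnd ℂ) (c * f (w θ)) := by
    intro θ
    have := Complex.add_conj (c * f (w θ))
    simp only [hg]
    push_cast
    rw [sub_sub, this]
    push_cast
    ring
  -- key identity for the integral of G * e^{-ik}
  have Ikey : (∫ θ : ℝ in (0:ℝ)..(2*π), ((g θ : ℝ) : ℂ) * Complex.exp (-(k:ℂ) * θ * I))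
      = -(c * (2 * π * a k * ρ^k)) := by
    rw [intervalIntegral.integral_congr (g := fun θ : ℝ =>
        (2:ℂ) * Complex.exp (-(k:ℂ) * θ * I)
        - c * f (w θ) * Complex.exp (-(k:ℂ) * θ * I)
        - (starRingEnd ℂ) (c * f (w θ)) * Complex.exp (-(k:ℂ) * θ * I))
      (fun θ _ => by rw [hGc θ]; ring)]
    rw [intervalIntegral.integral_sub (hint3.sub hint1) hint2,
      intervalIntegral.integral_sub hint3 hint1, I1, I2, I3]
    ring
  -- integral of g
  have hintcf : IntervalIntegrable (fun θ : ℝ => c * f (w θ)) MeasureTheory.volume 0 (2*π) :=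
    (continuous_const.mul hcf).intervalIntegrable _ _
  have hintre : IntervalIntegrable (fun θ : ℝ => (c * f (w θ)).re) MeasureTheory.volume 0 (2*π) :=
    (Complex.continuous_re.comp (continuous_const.mul hcf)).intervalIntegrable _ _
  have hre : (∫ θ : ℝ in (0:ℝ)..(2*π), (c * f (w θ)).re) = 2*π*‖(a 0)‖ := by
    have h0' : (∫ θ : ℝ in (0:ℝ)..(2*π), f (w θ)) = 2*π*a 0 := by
      have h0 := interchange hsum hρ0 hρ1 habs 0
      simpa using h0
    have hfc : (∫ θ : ℝ in (0:ℝ)..(2*π), c * f (w θ)) = c * (2*π*a 0) := by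
      rw [intervalIntegral.integral_const_mul, h0']
    have hcomm := ContinuousLinearMap.intervalIntegral_comp_comm Complex.reCLM hintcf
    simp only [Complex.reCLM_apply] at hcomm
    rw [hcomm, hfc, show c * (2*(π:ℂ)*a 0) = 2*(π:ℂ)*(c * a 0) by ring, hc2,
      show 2*(π:ℂ)*((‖(a 0)‖:ℝ):ℂ) = (((2*π*‖(a 0)‖):ℝ):ℂ) by push_cast; ring,
      Complex.ofReal_re]
  have hIg : (∫ θ : ℝ in (0:ℝ)..(2*π), g θ) = 4*π - 4*π*(‖(a 0)‖) := by
    have hsplit : (∫ θ : ℝ in (0:ℝ)..(2*π), g θ)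
        = (∫ θ : ℝ in (0:ℝ)..(2*π), (2:ℝ)) - ∫ θ : ℝ in (0:ℝ)..(2*π), 2*(c * f (w θ)).re :=
      intervalIntegral.integral_sub intervalIntegrable_const (hintre.const_mul 2)
    rw [hsplit, intervalIntegral.integral_const_mul, hre, intervalIntegral.integral_const]
    simp
    ring
  -- norm bound
  have hnb : 2*π * (‖(a k)‖ * ρ^k) ≤ ∫ θ : ℝ in (0:ℝ)..(2*π), g θ := by
    have h1 : ‖∫ θ : ℝ in (0:ℝ)..(2*π), ((g θ : ℝ) : ℂ) * Complex.exp (-(k:ℂ) * θ * I)‖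
        ≤ ∫ θ : ℝ in (0:ℝ)..(2*π), ‖((g θ : ℝ) : ℂ) * Complex.exp (-(k:ℂ) * θ * I)‖ :=
      intervalIntegral.norm_integral_le_integral_norm (by positivity)
    rw [Ikey] at h1
    have h2 : ∀ θ : ℝ, ‖((g θ : ℝ) : ℂ) * Complex.exp (-(k:ℂ) * θ * I)‖ = g θ := by
      intro θ
      rw [norm_mul, Complex.norm_real, Real.norm_eq_abs,
        show (-(k:ℂ) * θ * I) = (((-(k:ℝ)*θ : ℝ)) : ℂ) * I by push_cast; ring,
        Complex.norm_exp_ofReal_mul_I, mul_one, _root_.abs_of_nonneg (hg0 θ)]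
    rw [intervalIntegral.integral_congr (fun θ _ => h2 θ)] at h1
    calc 2*π * (‖(a k)‖ * ρ^k)
        = ‖-(c * (2 * π * a k * ρ^k))‖ := by
          rw [norm_neg, norm_mul, hc1, one_mul]
          rw [norm_mul, norm_mul, norm_mul]
          simp [Complex.norm_real, Real.norm_eq_abs, _root_.abs_of_nonneg pi_pos.le, _root_.abs_of_nonneg hρ0.le,
            abs_of_pos hρ0]
          ring
      _ ≤ _ := h1
  rw [hIg] at hnb
  nlinarith [pi_pos]


set_option maxHeartbeats 2000000 in
lemma schwarz_pick {f : ℂ → ℂ}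
    (hf : AnalyticOn ℂ f (ball (0:ℂ) 1))
    (hbound : ∀ z ∈ ball (0:ℂ) 1, ‖(f z)‖ < 1)
    {z : ℂ} (hz : z ∈ ball (0:ℂ) 1) :
    ‖(f z)‖ * (1 + ‖(f 0)‖ * ‖z‖)
      ≤ ‖(f 0)‖ + ‖z‖ := by
  have h0mem : (0:ℂ) ∈ ball (0:ℂ) 1 := by simp
  set w0 := f 0 with hw0
  have ha1 : ‖w0‖ < 1 := hbound 0 h0mem
  have hden : ∀ u ∈ ball (0:ℂ) 1, (1 : ℂ) - (starRingEnd ℂ) w0 * f u ≠ 0 := by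
    intro u hu h
    have habs : ‖((starRingEnd ℂ) w0 * f u)‖ < 1 := by
      rw [norm_mul, Complex.norm_conj]
      nlinarith [norm_nonneg w0, norm_nonneg (f u), hbound u hu, ha1]
    have : (starRingEnd ℂ) w0 * f u = 1 := by linear_combination -h
    rw [this] at habs; simp at habs
  set g : ℂ → ℂ := fun u => (f u - w0) / (1 - (starRingEnd ℂ) w0 * f u) with hg
  have hkey : ∀ u ∈ ball (0:ℂ) 1,
      Complex.normSq (1 - (starRingEnd ℂ) w0 * f u) - Complex.normSq (f u - w0)
        = (1 - Complex.normSq w0) * (1 - Complex.normSq (f u)) := by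
    intro u _
    simp only [Complex.normSq_apply, Complex.sub_re, Complex.sub_im, Complex.mul_re,
      Complex.mul_im, Complex.one_re, Complex.one_im, Complex.conj_re, Complex.conj_im]
    ring
  have hgd : DifferentiableOn ℂ g (ball (0:ℂ) 1) := by
    have hfd : DifferentiableOn ℂ f (ball (0:ℂ) 1) := hf.differentiableOn
    exact (hfd.sub (differentiableOn_const _)).div
      ((differentiableOn_const _).sub ((differentiableOn_const _).mul hfd)) hden
  have hmaps : Set.MapsTo g (ball (0:ℂ) 1) (ball (0:ℂ) 1) := by
    intro u hu
    have h1 : Complex.normSq (f u - w0) < Complex.normSq (1 - (starRingEnd ℂ) w0 * f u) := by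
      have h2 := hkey u hu
      have h3 : Complex.normSq w0 < 1 := by
        rw [← Complex.sq_norm]; nlinarith [norm_nonneg w0]
      have h4 : Complex.normSq (f u) < 1 := by
        rw [← Complex.sq_norm]; nlinarith [norm_nonneg (f u), hbound u hu]
      nlinarith
    have hdenne := hden u hu
    have hdenpos : 0 < ‖(1 - (starRingEnd ℂ) w0 * f u)‖ := by
      simpa [norm_pos_iff] using hdenne
    simp only [mem_ball, dist_zero_right, hg, norm_div]
    rw [div_lt_one hdenpos]
    have := Complex.sq_norm (f u - w0) ▸ Complex.sq_norm (1 - (starRingEnd ℂ) w0 * f u) ▸ h1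
    nlinarith [norm_nonneg (f u - w0), norm_nonneg (1 - (starRingEnd ℂ) w0 * f u)]
  have hg0 : g 0 = 0 := by simp [hg, hw0]
  have hsl := Complex.dist_le_dist_of_mapsTo_ball hgd
    (by rw [hg0]; exact hmaps.mono_right ball_subset_closedBall) hz
  simp only [hg0, dist_zero_right] at hsl
  -- turn into |f z - w0| ≤ |z| * |den|
  have hdenz := hden z hz
  have hdenzpos : 0 < ‖(1 - (starRingEnd ℂ) w0 * f z)‖ := by
    simpa [norm_pos_iff] using hdenz
  have hnum : ‖(f z - w0)‖
      ≤ ‖z‖ * ‖(1 - (starRingEnd ℂ) w0 * f z)‖ := by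
    have : ‖(g z)‖ = ‖(f z - w0)‖ / ‖(1 - (starRingEnd ℂ) w0 * f z)‖ := by
      simp [hg, norm_div]
    rw [this, div_le_iff₀ hdenzpos] at hsl
    exact hsl
  -- square it and expand
  set s := ‖(f z)‖ with hs
  set aa := ‖w0‖ with haa
  set r := ‖z‖ with hr
  have hs0 : 0 ≤ s := norm_nonneg _
  have ha0 : 0 ≤ aa := norm_nonneg _
  have hr0 : 0 ≤ r := norm_nonneg _
  have hs1 : s < 1 := hbound z hz
  have hr1 : r < 1 := by simpa [mem_ball, dist_zero_right] using hz
  have hsq : Complex.normSq (f z - w0) ≤ r^2 * Complex.normSq (1 - (starRingEnd ℂ) w0 * f z) := by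
    have := mul_le_mul hnum hnum (norm_nonneg _) (by positivity)
    rw [← Complex.sq_norm, ← Complex.sq_norm (1 - _)]
    nlinarith [this]
  have hX : (f z * (starRingEnd ℂ) w0).re ≤ s * aa := by
    calc (f z * (starRingEnd ℂ) w0).re ≤ ‖(f z * (starRingEnd ℂ) w0)‖ := Complex.re_le_norm _
      _ = s * aa := by rw [norm_mul, Complex.norm_conj]
  set X := (f z * (starRingEnd ℂ) w0).re with hXdef
  have hexp1 : Complex.normSq (f z - w0) = s^2 - 2*X + aa^2 := by
    rw [hs, haa, hXdef, show ‖(f z)‖^2 = Complex.normSq (f z) from Complex.sq_norm _,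
      show ‖w0‖^2 = Complex.normSq w0 from Complex.sq_norm _]
    simp only [Complex.normSq_apply, Complex.sub_re, Complex.sub_im,
      Complex.mul_re, Complex.mul_im, Complex.conj_re, Complex.conj_im]
    ring
  have hexp2 : Complex.normSq (1 - (starRingEnd ℂ) w0 * f z) = 1 - 2*X + aa^2 * s^2 := by
    rw [hs, haa, hXdef, show ‖(f z)‖^2 = Complex.normSq (f z) from Complex.sq_norm _,
      show ‖w0‖^2 = Complex.normSq w0 from Complex.sq_norm _]
    simp only [Complex.normSq_apply, Complex.sub_re, Complex.sub_im,
      Complex.mul_re, Complex.mul_im, Complex.conj_re, Complex.conj_im,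
      Complex.one_re, Complex.one_im]
    ring
  rw [hexp1, hexp2] at hsq
  -- now pure algebra
  have hr2 : (0:ℝ) ≤ 1 - r^2 := by nlinarith
  have hQ : s^2 + aa^2 - r^2 - aa^2*s^2*r^2 ≤ 2*(aa*s)*(1 - r^2) := by
    nlinarith [hsq, mul_le_mul_of_nonneg_right hX hr2]
  by_contra hcon
  push_neg at hcon
  have h1 : (1 + aa*r)*s - (aa + r) > 0 := by nlinarith [hcon]
  have hprod : ((1 + aa*r)*s - (aa + r)) * ((1 - aa*r)*s - (aa - r)) ≤ 0 := by nlinarith [hQ]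
  have h2 : (1 - aa*r)*s - (aa - r) ≤ 0 :=
    le_of_not_gt fun hgt => absurd hprod (not_le.mpr (mul_pos h1 hgt))
  have has1 : aa * s < 1 := by nlinarith
  nlinarith [h1, h2, mul_le_mul_of_nonneg_left has1.le hr0]

lemma coeff_bound {a : ℕ → ℂ} {f : ℂ → ℂ}
    (hf : AnalyticOn ℂ f (ball (0:ℂ) 1))
    (hsum : ∀ z ∈ ball (0:ℂ) 1, HasSum (fun k : ℕ => a k * z ^ k) (f z))
    (hbound : ∀ z ∈ ball (0:ℂ) 1, ‖(f z)‖ < 1)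
    (k : ℕ) (hk : 1 ≤ k) :
    ‖(a k)‖ ≤ 2 * (1 - ‖(a 0)‖) := by
  have hsummable : ∀ ρ' : ℝ, 0 ≤ ρ' → ρ' < 1 → Summable (fun m => a m * (ρ' : ℂ)^m) := by
    intro ρ' h0 h1
    refine (hsum ((ρ' : ℝ) : ℂ) ?_).summable
    simp only [mem_ball, dist_zero_right, Complex.norm_real, Real.norm_eq_abs]
    rwa [_root_.abs_of_nonneg h0]
  have key : ∀ ρ ∈ Set.Ioo (0:ℝ) 1, ‖(a k)‖ * ρ^k ≤ 2*(1 - ‖(a 0)‖) :=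
    fun ρ hρ => coeff_bound_at hf hsum hbound hρ.1 hρ.2
      (summable_abs_rpow hsummable hρ.1.le hρ.2) k hk
  have ht : Filter.Tendsto (fun ρ : ℝ => ‖(a k)‖ * ρ^k)
      (nhdsWithin 1 (Set.Iio 1)) (nhds (‖(a k)‖)) := by
    have hc : Continuous fun ρ : ℝ => ‖(a k)‖ * ρ^k :=
      continuous_const.mul (continuous_pow k)
    have := hc.tendsto 1
    simp only [one_pow, mul_one] at this
    exact this.mono_left nhdsWithin_le_nhds
  refine le_of_tendsto ht ?_
  filter_upwards [Ioo_mem_nhdsLT_of_mem (by constructor <;> norm_num : (1:ℝ) ∈ Set.Ioc (0:ℝ) 1)]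
    with ρ hρ using key ρ hρ

end BohrRogosinskiAux

/-- Theorem 1, first part (Bohr–Rogosinski inequality): if `f` is analytic on the unit
disk with `|f| < 1` and `2(1+r)r^N ≤ (1-r)^2`, then
`|f(z)| + ∑_{k=N}^∞ |a_k| r^k ≤ 1` for `|z| = r`. -/
theorem bohr_rogosinski_radius (f : ℂ → ℂ) (a : ℕ → ℂ)
    (hf : AnalyticOn ℂ f (ball (0:ℂ) 1))
    (hsum : ∀ z ∈ ball (0:ℂ) 1, HasSum (fun k : ℕ => a k * z ^ k) (f z))
    (hbound : ∀ z ∈ ball (0:ℂ) 1, ‖f z‖ < 1)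
    (N : ℕ) (hN : 1 ≤ N)
    (r : ℝ) (hr0 : 0 ≤ r) (hr1 : r < 1)
    (hroot : 2 * (1 + r) * r ^ N ≤ (1 - r) ^ 2)
    (z : ℂ) (hz : ‖z‖ = r) :
    ‖f z‖ + ∑' k : ℕ, ‖a (N + k)‖ * r ^ (N + k) ≤ 1 := by
  have hzball : z ∈ ball (0:ℂ) 1 := by
    simp only [mem_ball, dist_zero_right]
    rw [hz]; exact hr1
  have h0ball : (0:ℂ) ∈ ball (0:ℂ) 1 := by simp
  -- a 0 = f 0
  have ha0 : a 0 = f 0 := by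
    have h1 : HasSum (fun k : ℕ => a k * (0:ℂ)^k) (a 0) := by
      have := hasSum_single (f := fun k : ℕ => a k * (0:ℂ)^k) 0
        (fun b hb => by simp [zero_pow hb])
      simpa using this
    exact h1.unique (hsum 0 h0ball)
  set A := ‖(a 0)‖ with hA
  have hA0 : 0 ≤ A := norm_nonneg _
  have hA1 : A < 1 := by rw [hA, ha0]; exact hbound 0 h0ball
  -- Schwarz–Pick
  have hs := schwarz_pick hf hbound hzball
  rw [hz, ← ha0, ← hA] at hs
  set s := ‖(f z)‖ with hsdef
  have hs1 : s < 1 := hbound z hzball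
  have hs0 : 0 ≤ s := norm_nonneg _
  -- tail bound
  have hsummable' : ∀ ρ' : ℝ, 0 ≤ ρ' → ρ' < 1 → Summable (fun m => a m * (ρ' : ℂ)^m) := by
    intro ρ' h0 h1
    refine (hsum ((ρ' : ℝ) : ℂ) ?_).summable
    simp only [mem_ball, dist_zero_right, Complex.norm_real, Real.norm_eq_abs]
    rwa [_root_.abs_of_nonneg h0]
  have habs : Summable (fun m : ℕ => ‖(a m)‖ * r^m) :=
    summable_abs_rpow hsummable' hr0 hr1
  have htail_sum : Summable (fun k : ℕ => ‖(a (N + k))‖ * r^(N + k)) := by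
    have := (summable_nat_add_iff (f := fun m : ℕ => ‖(a m)‖ * r^m) N).mpr habs
    refine this.congr fun k => by rw [add_comm]
  have hgeom : Summable (fun k : ℕ => (2*(1 - A)*r^N) * r^k) :=
    (summable_geometric_of_lt_one hr0 hr1).mul_left _
  set T := ∑' k : ℕ, ‖(a (N + k))‖ * r^(N + k) with hT
  have hTle : T ≤ 2*(1 - A)*r^N*(1-r)⁻¹ := by
    have hle : ∀ k : ℕ, ‖(a (N + k))‖ * r^(N + k) ≤ (2*(1 - A)*r^N) * r^k := by
      intro k
      have hc := coeff_bound hf hsum hbound (N + k) (le_add_right hN)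
      rw [pow_add]
      calc ‖(a (N + k))‖ * (r^N * r^k)
          ≤ (2*(1 - A)) * (r^N * r^k) := by
            apply mul_le_mul_of_nonneg_right hc (by positivity)
        _ = (2*(1 - A)*r^N) * r^k := by ring
    calc T ≤ ∑' k : ℕ, (2*(1 - A)*r^N) * r^k := Summable.tsum_le_tsum hle htail_sum hgeom
      _ = (2*(1 - A)*r^N) * ∑' k : ℕ, r^k := tsum_mul_left
      _ = 2*(1 - A)*r^N*(1-r)⁻¹ := by rw [tsum_geometric_of_lt_one hr0 hr1]
  have hT0 : 0 ≤ T := tsum_nonneg fun k => by positivity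
  -- combine
  have hr1' : (0:ℝ) < 1 - r := by linarith
  have hT2 : T * (1 - r) ≤ 2*(1 - A)*r^N := by
    have := mul_le_mul_of_nonneg_right hTle hr1'.le
    calc T * (1-r) ≤ 2*(1 - A)*r^N*(1-r)⁻¹ * (1-r) := this
      _ = 2*(1 - A)*r^N := by field_simp
  have hP0 : (0:ℝ) ≤ r^N := by positivity
  have h1Ar : (0:ℝ) < 1 + A*r := by nlinarith
  have har : A*r ≤ r := by nlinarith [hA1, hr0]
  have e3 : 2*r^N*(1+A*r) ≤ (1-r)^2 := by
    nlinarith [hroot, mul_le_mul_of_nonneg_left har (by positivity : (0:ℝ) ≤ 2*r^N)]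
  have f1 := mul_le_mul_of_nonneg_right hs hr1'.le
  have f2 := mul_le_mul_of_nonneg_right hT2 h1Ar.le
  have f3 := mul_le_mul_of_nonneg_left e3 (by linarith : (0:ℝ) ≤ 1 - A)
  have hmain : (s + T)*((1+A*r)*(1-r)) ≤ 1*((1+A*r)*(1-r)) := by nlinarith [f1, f2, f3]
  exact le_of_mul_le_mul_right hmain (by positivity)
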